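/- Let k ≥ 2, d ≥ 1, and let S be a training set with each ‖x_i‖_∞ ≤ 1 and training loss L. Fix any W ∈ ℝ^{k×d} and any column index j ∈ {1,…,d}, and let u ∈ ℝ^k be defined by u_q = (1/2) ‖∇_j L(W)‖_1 · sgn((∇_j L(W))_q) for each q. Then L(W − u e_jᵀ) ≤ L(W) − (1/4) ‖∇_j L(W)‖_1². -/

import Mathlib

open scoped BigOperators

noncomputable section

/-- The multiclass logistic loss for label `y`. -/
def mcLoss (k : ℕ) (y : Fin k) (v : Fin k → ℝ) : ℝ :=
  Real.log (∑ y' : Fin k, Real.exp ((if y' ≠ y then (1 : ℝ) else 0) - v y + v y'))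

/-- The average training loss of the matrix `W` (viewed as `Fin k → Fin d → ℝ`). -/
def trainLoss (k d m : ℕ) (x : Fin m → Fin d → ℝ) (y : Fin m → Fin k)
    (W : Fin k → Fin d → ℝ) : ℝ :=
  (1 / (m : ℝ)) * ∑ i : Fin m, mcLoss k (y i) (fun q => ∑ j : Fin d, W q j * x i j)

/-- The `r`-th column of the gradient matrix of `L` at `W`. -/
def gradCol (k d : ℕ) (L : (Fin k → Fin d → ℝ) → ℝ) (W : Fin k → Fin d → ℝ)
    (r : Fin d) : Fin k → ℝ :=
  fun q => fderiv ℝ L W (fun q' j' => if q' = q ∧ j' = r then (1 : ℝ) else 0)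

variable {k : ℕ}

def S0 (b a : Fin k → ℝ) (t : ℝ) : ℝ := ∑ q, Real.exp (b q + t * a q)
def S1 (b a : Fin k → ℝ) (t : ℝ) : ℝ := ∑ q, Real.exp (b q + t * a q) * a q
def S2 (b a : Fin k → ℝ) (t : ℝ) : ℝ := ∑ q, Real.exp (b q + t * a q) * a q * a q
def lse (b a : Fin k → ℝ) (t : ℝ) : ℝ := Real.log (S0 b a t)
def lse' (b a : Fin k → ℝ) (t : ℝ) : ℝ := S1 b a t / S0 b a t

lemma S0_pos [NeZero k] (b a : Fin k → ℝ) (t : ℝ) : 0 < S0 b a t :=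
  Finset.sum_pos (fun q _ => Real.exp_pos _) ⟨0, Finset.mem_univ 0⟩

lemma hasDerivAt_S0 (b a : Fin k → ℝ) (t : ℝ) : HasDerivAt (S0 b a) (S1 b a t) t := by
  apply HasDerivAt.fun_sum
  intro q _
  have h : HasDerivAt (fun t : ℝ => b q + t * a q) (a q) t := by
    simpa using ((hasDerivAt_id t).mul_const (a q)).const_add (b q)
  exact h.exp

lemma hasDerivAt_S1 (b a : Fin k → ℝ) (t : ℝ) : HasDerivAt (S1 b a) (S2 b a t) t := by
  apply HasDerivAt.fun_sum
  intro q _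
  have h : HasDerivAt (fun t : ℝ => b q + t * a q) (a q) t := by
    simpa using ((hasDerivAt_id t).mul_const (a q)).const_add (b q)
  exact h.exp.mul_const (a q)

lemma hasDerivAt_lse [NeZero k] (b a : Fin k → ℝ) (t : ℝ) :
    HasDerivAt (lse b a) (lse' b a t) t :=
  (hasDerivAt_S0 b a t).log (S0_pos b a t).ne'

lemma hasDerivAt_lse' [NeZero k] (b a : Fin k → ℝ) (t : ℝ) :
    HasDerivAt (lse' b a)
      ((S2 b a t * S0 b a t - S1 b a t * S1 b a t) / (S0 b a t)^2) t :=
  (hasDerivAt_S1 b a t).div (hasDerivAt_S0 b a t) (S0_pos b a t).ne'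

lemma lse''_bound [NeZero k] (b a : Fin k → ℝ) (s M : ℝ)
    (hM : 0 ≤ M) (he : ∀ q, |a q - s| ≤ M) (t : ℝ) :
    (S2 b a t * S0 b a t - S1 b a t * S1 b a t) / (S0 b a t)^2 ≤ M^2 := by
  have hS0 := S0_pos b a t
  rw [div_le_iff₀ (by positivity)]
  set w : Fin k → ℝ := fun q => Real.exp (b q + t * a q) with hw
  have hwpos : ∀ q, 0 < w q := fun q => Real.exp_pos _
  set e : Fin k → ℝ := fun q => a q - s with hedef
  have hA : S2 b a t = (∑ q, w q * e q * e q) + 2 * s * (∑ q, w q * e q) + s^2 * S0 b a t := by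
    simp only [S2, S0, ← Finset.sum_add_distrib, Finset.mul_sum]
    apply Finset.sum_congr rfl; intro q _
    have : a q = e q + s := by simp [hedef]
    simp only [hw]; rw [this]; ring
  have hB : S1 b a t = (∑ q, w q * e q) + s * S0 b a t := by
    simp only [S1, S0, ← Finset.sum_add_distrib, Finset.mul_sum]
    apply Finset.sum_congr rfl; intro q _
    have : a q = e q + s := by simp [hedef]
    simp only [hw]; rw [this]; ring
  have hAle : (∑ q, w q * e q * e q) ≤ M^2 * S0 b a t := by
    rw [S0, Finset.mul_sum]
    apply Finset.sum_le_sum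
    intro q _
    have h1 : e q * e q ≤ M^2 := by
      have h2 := abs_le.mp (he q)
      simp only [hedef]
      nlinarith [h2.1, h2.2]
    have := (hwpos q).le
    nlinarith
  have hC : 0 < S0 b a t := hS0
  have key : S2 b a t * S0 b a t - S1 b a t * S1 b a t =
      (∑ q, w q * e q * e q) * S0 b a t - (∑ q, w q * e q) * (∑ q, w q * e q) := by
    rw [hA, hB]; ring
  nlinarith [sq_nonneg (∑ q, w q * e q), mul_le_mul_of_nonneg_right hAle hC.le]

lemma taylor_bound (g g' g'' : ℝ → ℝ) (C : ℝ)
    (h1 : ∀ t, HasDerivAt g (g' t) t)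
    (h2 : ∀ t, HasDerivAt g' (g'' t) t)
    (hb : ∀ t, g'' t ≤ C) :
    g 1 ≤ g 0 + g' 0 + C / 2 := by
  set p : ℝ → ℝ := fun t => g' 0 + C * t - g' t with hp
  have hpderiv : ∀ t, HasDerivAt p (C - g'' t) t := by
    intro t
    have : HasDerivAt (fun t : ℝ => g' 0 + C * t) C t := by
      simpa using ((hasDerivAt_id t).const_mul C).const_add (g' 0)
    simpa using this.fun_sub (h2 t)
  have hpmono : MonotoneOn p (Set.Icc (0:ℝ) 1) := by
    apply monotoneOn_of_deriv_nonneg (convex_Icc 0 1)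
    · exact (Differentiable.continuous fun t => (hpderiv t).differentiableAt).continuousOn
    · intro t _; exact (hpderiv t).differentiableAt.differentiableWithinAt
    · intro t _
      rw [(hpderiv t).deriv]
      linarith [hb t]
  have hpnonneg : ∀ t ∈ Set.Icc (0:ℝ) 1, 0 ≤ p t := by
    intro t ht
    have := hpmono (Set.left_mem_Icc.mpr one_pos.le) ht ht.1
    simpa [hp] using this
  set h : ℝ → ℝ := fun t => g 0 + t * g' 0 + C * t^2 / 2 - g t with hh
  have hhderiv : ∀ t, HasDerivAt h (p t) t := by
    intro t
    have h3 : HasDerivAt (fun t : ℝ => g 0 + t * g' 0 + C * t^2 / 2) (g' 0 + C * t) t := by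
      have : HasDerivAt (fun t : ℝ => g 0 + t * g' 0) (g' 0) t := by
        simpa using ((hasDerivAt_id t).mul_const (g' 0)).const_add (g 0)
      have h4 : HasDerivAt (fun t : ℝ => C * t^2 / 2) (C * t) t := by
        have := ((hasDerivAt_pow 2 t).const_mul C).div_const 2
        simpa using this.congr_deriv (by ring)
      simpa using this.fun_add h4
    have := h3.fun_sub (h1 t)
    simpa [hp] using this.congr_deriv (by ring)
  have hhmono : MonotoneOn h (Set.Icc (0:ℝ) 1) := by
    apply monotoneOn_of_deriv_nonneg (convex_Icc 0 1)
    · exact (Differentiable.continuous fun t => (hhderiv t).differentiableAt).continuousOn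
    · intro t _; exact (hhderiv t).differentiableAt.differentiableWithinAt
    · intro t ht
      rw [(hhderiv t).deriv]
      exact hpnonneg t (interior_subset ht)
  have := hhmono (Set.left_mem_Icc.mpr one_pos.le) (Set.right_mem_Icc.mpr one_pos.le) one_pos.le
  simp only [hh] at this
  nlinarith [this]

lemma sign_mul_self_eq_abs (v : ℝ) : Real.sign v * v = |v| := by
  rcases lt_trichotomy v 0 with h | h | h
  · rw [Real.sign_of_neg h, abs_of_neg h]; ring
  · simp [h]
  · rw [Real.sign_of_pos h, abs_of_pos h]; ring

lemma abs_sign_le_one (v : ℝ) : |Real.sign v| ≤ 1 := by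
  rcases lt_trichotomy v 0 with h | h | h
  · rw [Real.sign_of_neg h]; norm_num
  · simp [h]
  · rw [Real.sign_of_pos h]; norm_num

lemma trainLoss_differentiable (k d m : ℕ) [NeZero k]
    (x : Fin m → Fin d → ℝ) (y : Fin m → Fin k) :
    Differentiable ℝ (trainLoss k d m x y) := by
  unfold trainLoss mcLoss
  apply Differentiable.const_mul
  apply Differentiable.fun_sum
  intro i _
  have hlin : ∀ q : Fin k,
      Differentiable ℝ (fun W : Fin k → Fin d → ℝ => ∑ j' : Fin d, W q j' * x i j') := by
    intro q
    apply Differentiable.fun_sum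
    intro j' _
    exact ((differentiable_apply (𝕜 := ℝ) (F' := fun _ : Fin d => ℝ) j').comp (differentiable_apply (𝕜 := ℝ) (F' := fun _ : Fin k => Fin d → ℝ) q)).mul_const _
  apply Differentiable.log
  · apply Differentiable.fun_sum
    intro y' _
    exact (((differentiable_const _).sub (hlin (y i))).add (hlin y')).exp
  · intro W
    exact (Finset.sum_pos (fun _ _ => Real.exp_pos _)
      ⟨0, Finset.mem_univ (0 : Fin k)⟩).ne'


/-- **Guaranteed decrease from the gradient step.** With
`u_q = (1/2) ‖∇_j L(W)‖₁ · sgn((∇_j L(W))_q)`, one has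
`L(W - u eⱼᵀ) ≤ L(W) - (1/4) ‖∇_j L(W)‖₁²`. -/


theorem shareBoost_gradient_step_decrease
    (k d m : ℕ) (hk : 2 ≤ k) (hd : 1 ≤ d) (hm : 1 ≤ m)
    (x : Fin m → Fin d → ℝ) (y : Fin m → Fin k)
    (hx : ∀ i : Fin m, ‖x i‖ ≤ 1)
    (W : Fin k → Fin d → ℝ) (j : Fin d)
    (u : Fin k → ℝ)
    (hu : ∀ q, u q = (1 / 2) * (∑ p : Fin k, |gradCol k d (trainLoss k d m x y) W j p|) *
      Real.sign (gradCol k d (trainLoss k d m x y) W j q)) :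
    trainLoss k d m x y (fun q i => W q i - if i = j then u q else 0) ≤
      trainLoss k d m x y W -
        (1 / 4) * (∑ q : Fin k, |gradCol k d (trainLoss k d m x y) W j q|) ^ 2 := by
  haveI : NeZero k := ⟨by omega⟩
  haveI : NeZero m := ⟨by omega⟩
  set L := trainLoss k d m x y with hL
  set g : Fin k → ℝ := gradCol k d L W j with hg
  set G : ℝ := ∑ q : Fin k, |g q| with hG
  have hGnn : 0 ≤ G := Finset.sum_nonneg fun q _ => abs_nonneg _
  -- bound on |u|
  have huabs : ∀ q, |u q| ≤ (1/2) * G := by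
    intro q
    rw [hu q, abs_mul]
    calc |1/2 * G| * |Real.sign (g q)| ≤ |1/2 * G| * 1 :=
          mul_le_mul_of_nonneg_left (abs_sign_le_one _) (abs_nonneg _)
      _ = (1/2) * G := by rw [mul_one, abs_of_nonneg (by linarith)]
  -- the direction and line
  set D : Fin k → Fin d → ℝ := fun q i' => -(if i' = j then u q else 0) with hD
  set line : ℝ → (Fin k → Fin d → ℝ) := fun t => fun q i' => W q i' + t * D q i' with hline
  -- samples data
  set c : Fin m → ℝ := fun i => x i j with hc
  set V : Fin m → Fin k → ℝ := fun i q => ∑ j' : Fin d, W q j' * x i j' with hV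
  set b : Fin m → Fin k → ℝ :=
    fun i y' => (if y' ≠ y i then (1:ℝ) else 0) - V i (y i) + V i y' with hb
  set a : Fin m → Fin k → ℝ := fun i y' => (u (y i) - u y') * c i with ha
  -- key representation: L (line t) = ψ t
  have hrep : ∀ t : ℝ, L (line t) = (1 / (m:ℝ)) * ∑ i : Fin m, lse (b i) (a i) t := by
    intro t
    rw [hL]
    unfold trainLoss mcLoss lse S0
    congr 1
    apply Finset.sum_congr rfl
    intro i _
    congr 1
    apply Finset.sum_congr rfl
    intro y' _
    congr 1
    have hinner : ∀ q : Fin k,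
        (∑ j' : Fin d, line t q j' * x i j') = V i q - t * (u q * c i) := by
      intro q
      have e1 : ∑ j' : Fin d, line t q j' * x i j'
          = (∑ j' : Fin d, W q j' * x i j')
            + ∑ j' : Fin d, (if j' = j then -(t * (u q * x i j')) else 0) := by
        rw [← Finset.sum_add_distrib]
        apply Finset.sum_congr rfl
        intro j' _
        by_cases h : j' = j <;> simp [hline, hD, h] <;> ring
      rw [e1, Finset.sum_ite_eq' Finset.univ j (fun j' => -(t * (u q * x i j')))]
      simp only [Finset.mem_univ, if_true, hV, hc]
      ring
    beta_reduce
    rw [hinner, hinner]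
    simp only [hb, ha, hc]
    ring
  -- ψ and its derivative
  set ψ : ℝ → ℝ := fun t => (1/(m:ℝ)) * ∑ i : Fin m, lse (b i) (a i) t with hψ
  set ψ' : ℝ → ℝ := fun t => (1/(m:ℝ)) * ∑ i : Fin m, lse' (b i) (a i) t with hψ'
  have hψd : ∀ t, HasDerivAt ψ (ψ' t) t := fun t =>
    (HasDerivAt.fun_sum (fun i _ => hasDerivAt_lse (b i) (a i) t)).const_mul _
  have hlineW : line 0 = W := by funext q i'; simp [hline]
  have hlinederiv : HasDerivAt line D 0 := by
    apply hasDerivAt_pi.2; intro q; apply hasDerivAt_pi.2; intro i'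
    have : HasDerivAt (fun t : ℝ => W q i' + t * D q i') (D q i') 0 := by
      simpa using ((hasDerivAt_id (0:ℝ)).mul_const (D q i')).const_add (W q i')
    exact this
  have hLdiff := trainLoss_differentiable k d m x y
  have hφ : HasDerivAt (fun t => L (line t)) (fderiv ℝ L W D) 0 := by
    have h1 : HasFDerivAt L (fderiv ℝ L W) (line 0) := by
      rw [hlineW]; exact (hLdiff W).hasFDerivAt
    exact h1.comp_hasDerivAt 0 hlinederiv
  have hφψ : (fun t => L (line t)) = ψ := funext fun t => hrep t
  rw [hφψ] at hφ
  have hψ'0 : ψ' 0 = fderiv ℝ L W D := HasDerivAt.unique (hψd 0) hφ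
  -- compute the directional derivative
  have hDsum : D = ∑ q : Fin k,
      (-(u q)) • (fun q' j' => if q' = q ∧ j' = j then (1:ℝ) else 0) := by
    funext q' i'
    rw [Finset.sum_apply, Finset.sum_apply]
    by_cases h : i' = j
    · simp only [hD, h, if_true, Pi.smul_apply, smul_eq_mul, and_true]
      have h3 : ∀ q : Fin k, -(u q) * (if q' = q then (1:ℝ) else 0)
          = if q' = q then -(u q) else 0 := by
        intro q; rw [mul_ite, mul_one, mul_zero]
      rw [Finset.sum_congr rfl (fun q _ => h3 q),
        Finset.sum_ite_eq Finset.univ q' (fun q => -(u q))]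
      simp
    · simp [hD, h]
  have hfD : fderiv ℝ L W D = ∑ q : Fin k, (-(u q)) * g q := by
    rw [hDsum, map_sum]
    apply Finset.sum_congr rfl
    intro q _
    rw [map_smul]
    simp [hg, gradCol, smul_eq_mul]
  have hval : (∑ q : Fin k, (-(u q)) * g q) = -(1/2) * G^2 := by
    have h2 : ∀ q : Fin k, (-(u q)) * g q = -(1/2) * G * |g q| := by
      intro q
      calc (-(u q)) * g q = -(1/2) * G * (Real.sign (g q) * g q) := by rw [hu q]; ring
        _ = -(1/2) * G * |g q| := by rw [sign_mul_self_eq_abs]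
    rw [Finset.sum_congr rfl (fun q _ => h2 q), ← Finset.mul_sum, ← hG]
    ring
  have hψ'0val : ψ' 0 = -(1/2) * G^2 := by rw [hψ'0, hfD, hval]
  -- per-sample Taylor bound
  have hxc : ∀ i : Fin m, |c i| ≤ 1 := by
    intro i
    have h1 : ‖x i j‖ ≤ ‖x i‖ := norm_le_pi_norm (x i) j
    rw [Real.norm_eq_abs] at h1
    exact h1.trans (hx i)
  have hstep : ∀ i : Fin m, lse (b i) (a i) 1 ≤
      lse (b i) (a i) 0 + lse' (b i) (a i) 0 + ((1/2) * G)^2 / 2 := by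
    intro i
    apply taylor_bound (lse (b i) (a i)) (lse' (b i) (a i))
      (fun t => (S2 (b i) (a i) t * S0 (b i) (a i) t
        - S1 (b i) (a i) t * S1 (b i) (a i) t) / (S0 (b i) (a i) t)^2)
      (((1/2) * G)^2)
    · exact fun t => hasDerivAt_lse _ _ t
    · exact fun t => hasDerivAt_lse' _ _ t
    · intro t
      apply lse''_bound (b i) (a i) (u (y i) * c i) ((1/2) * G) (by linarith)
      intro q
      have : a i q - u (y i) * c i = (-(u q)) * c i := by simp [ha]; ring
      rw [this, abs_mul, abs_neg]
      calc |u q| * |c i| ≤ ((1/2) * G) * 1 :=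
        mul_le_mul (huabs q) (hxc i) (abs_nonneg _) (by linarith)
        _ = (1/2) * G := mul_one _
  -- assemble
  have hline1 : (fun q i => W q i - if i = j then u q else 0) = line 1 := by
    funext q i'
    simp [hline, hD]
    ring
  have hmpos : (0:ℝ) < m := by positivity
  have hsum : (1/(m:ℝ)) * ∑ i : Fin m, lse (b i) (a i) 1 ≤
      (1/(m:ℝ)) * ∑ i : Fin m, (lse (b i) (a i) 0 + lse' (b i) (a i) 0 + ((1/2)*G)^2/2) := by
    apply mul_le_mul_of_nonneg_left (Finset.sum_le_sum (fun i _ => hstep i)) (by positivity)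
  have hsplit : (1/(m:ℝ)) * ∑ i : Fin m, (lse (b i) (a i) 0 + lse' (b i) (a i) 0 + ((1/2)*G)^2/2)
      = ψ 0 + ψ' 0 + ((1/2)*G)^2/2 := by
    rw [Finset.sum_add_distrib, Finset.sum_add_distrib, Finset.sum_const, Finset.card_univ,
      Fintype.card_fin]
    simp only [hψ, hψ', nsmul_eq_mul]
    field_simp
  have hψ0 : ψ 0 = L W := by
    rw [show ψ 0 = (1/(m:ℝ)) * ∑ i : Fin m, lse (b i) (a i) 0 from rfl, ← hrep 0, hlineW]
  have final : L (line 1) ≤ L W - (1/4) * G^2 := by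
    rw [hrep 1]
    calc (1/(m:ℝ)) * ∑ i : Fin m, lse (b i) (a i) 1
        ≤ ψ 0 + ψ' 0 + ((1/2)*G)^2/2 := by rw [← hsplit]; exact hsum
      _ = L W - (1/2) * G^2 + G^2/8 := by rw [hψ0, hψ'0val]; ring
      _ ≤ L W - (1/4) * G^2 := by nlinarith [sq_nonneg G]
  rw [hline1]
  exact final
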